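/- If soc(A) is not a cyclic R-module, then for every subgroup G of Aut_R(A), A does not have the extension property with respect to swc_G: there exist a positive integer n, a linear code C ⊆ A^n, and an swc_G-isometry f : C → A^n that does not extend to a G-monomial map of A^n. -/

import Mathlib

set_option maxHeartbeats 1600000
set_option synthInstance.maxHeartbeats 400000
set_option linter.unnecessarySimpa false


variable {R A : Type*} [Ring R] [AddCommGroup A] [Module R A]

/-- The orbit of `a₀ ∈ A` under a subgroup `G ≤ Aut_R(A)`; the orbits in `A/G` are
exactly the sets `orbitG G a₀` for `a₀ : A`. -/
def orbitG (G : Subgroup (A ≃ₗ[R] A)) (a₀ : A) : Set A :=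
  {b | ∃ g ∈ G, (g : A ≃ₗ[R] A) a₀ = b}

/-- The symmetrized weight composition built on `G`: `swcG G a a₀` is the number of
coordinates of `a ∈ A^n` lying in the orbit of `a₀`. -/
noncomputable def swcG (G : Subgroup (A ≃ₗ[R] A)) {n : ℕ} (a : Fin n → A) (a₀ : A) : ℚ :=
  Nat.card {i : Fin n // a i ∈ orbitG G a₀}

/-- Membership in the closure `Ḡ` of `G`: `g` maps every `G`-orbit onto itself. -/
def inClosure (G : Subgroup (A ≃ₗ[R] A)) (g : A ≃ₗ[R] A) : Prop :=
  ∀ a₀ : A, (g : A ≃ₗ[R] A) '' orbitG G a₀ = orbitG G a₀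

/-- A map `h : A^n → A^n` is `G`-monomial if there are a permutation `π` and
automorphisms `g₁, …, g_n` in the closure `Ḡ` with `h(a)_i = g_i (a_{π i})`. -/
def IsGMonomial (G : Subgroup (A ≃ₗ[R] A)) {n : ℕ} (h : (Fin n → A) → (Fin n → A)) : Prop :=
  ∃ (π : Equiv.Perm (Fin n)) (g : Fin n → (A ≃ₗ[R] A)),
    (∀ i, inClosure G (g i)) ∧ ∀ (a : Fin n → A) (i : Fin n), h a i = (g i) (a (π i))

/-- The socle of a module: the sum of all simple submodules, i.e. the supremum of the
atoms of the submodule lattice. -/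
def socle (R A : Type*) [Ring R] [AddCommGroup A] [Module R A] : Submodule R A :=
  sSup {S : Submodule R A | IsAtom S}

/-- `A` has the extension property with respect to `swc_G`: for every length `n`,
every linear code `C ⊆ A^n` and every `swc_G`-isometry `f : C → A^n`, the map `f`
extends to a `G`-monomial map of `A^n`. -/
def HasExtensionProperty (R : Type*) (A : Type*) [Ring R] [AddCommGroup A] [Module R A]
    (G : Subgroup (A ≃ₗ[R] A)) : Prop :=
  ∀ n : ℕ, 0 < n → ∀ (C : Submodule R (Fin n → A)) (f : C →ₗ[R] (Fin n → A)),
    (∀ (c : C) (a₀ : A), swcG G (f c : Fin n → A) a₀ = swcG G (c : Fin n → A) a₀) →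
    ∃ h : (Fin n → A) → (Fin n → A),
      IsGMonomial G h ∧ ∀ c : C, h (c : Fin n → A) = f c

lemma atom_inf_bot {T X : Submodule R A} (hT : IsAtom T) (h : ¬ T ≤ X) : T ⊓ X = ⊥ := by
  rcases lt_or_eq_of_le (inf_le_left : T ⊓ X ≤ T) with hlt | heq
  · exact hT.2 _ hlt
  · exact absurd (inf_eq_left.mp heq) h

/-- Complements relative to a finite supply of atoms. -/
lemma compl_lemma (s : Finset (Submodule R A)) (hs : ∀ S ∈ s, IsAtom S) :
    ∀ C C' : Submodule R A, C ⊓ C' = ⊥ →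
      ∃ C'', C' ≤ C'' ∧ C ⊓ C'' = ⊥ ∧ C ⊔ C'' = C ⊔ C' ⊔ s.sup id := by
  classical
  induction s using Finset.induction_on with
  | empty => exact fun C C' h => ⟨C', le_refl _, h, by simp⟩
  | @insert T s hTs ih =>
    intro C C' h
    obtain ⟨C'', h1, h2, h3⟩ := ih (fun S hS => hs S (Finset.mem_insert_of_mem hS)) C C' h
    rw [Finset.sup_insert]
    have hT : IsAtom T := hs T (Finset.mem_insert_self T s)
    by_cases hTle : T ≤ C ⊔ C''
    · refine ⟨C'', h1, h2, ?_⟩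
      have : C ⊔ C' ⊔ (id T ⊔ s.sup id) = (C ⊔ C' ⊔ s.sup id) ⊔ T := by
        simp only [id_eq]
        rw [sup_assoc, sup_comm T (s.sup id), ← sup_assoc, ← sup_assoc]
      rw [this, ← h3, sup_eq_left.mpr hTle]
    · have hTd : T ⊓ (C ⊔ C'') = ⊥ := atom_inf_bot hT hTle
      refine ⟨C'' ⊔ T, le_trans h1 le_sup_left, ?_, ?_⟩
      · apply eq_bot_iff.mpr
        rintro a ha
        obtain ⟨haC, haCT⟩ := Submodule.mem_inf.mp ha
        obtain ⟨c'', hc'', t, ht, hsum⟩ := Submodule.mem_sup.mp haCT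
        have htmem : t ∈ T ⊓ (C ⊔ C'') := by
          refine Submodule.mem_inf.mpr ⟨ht, ?_⟩
          have : t = a - c'' := by rw [← hsum]; abel
          rw [this]
          exact sub_mem (Submodule.mem_sup_left haC) (Submodule.mem_sup_right hc'')
        rw [hTd] at htmem
        have ht0 : t = 0 := htmem
        have : a = c'' := by rw [← hsum, ht0, add_zero]
        have : a ∈ C ⊓ C'' := Submodule.mem_inf.mpr ⟨haC, this ▸ hc''⟩
        rwa [h2] at this
      · rw [← sup_assoc, h3]
        simp only [id_eq]
        rw [sup_assoc, sup_comm (s.sup id) T]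

theorem part1 [Finite R] [Finite A]
    (hncyc : ¬ ∃ a : A, sSup {S : Submodule R A | IsAtom S} = Submodule.span R {a}) :
    ∃ T : Submodule R A, IsAtom T ∧
      ∃ k : ℕ, 0 < k ∧
        ∃ w : Fin k → (↥T →ₗ[R] A),
          (∀ m : Fin k → ↥T, (∑ j, w j (m j)) = 0 → m = 0) ∧
          (∀ m : Fin k → ↥T, ∃ z : Fin k → Module.End R ↥T,
              z ≠ 0 ∧ (∑ a, (z a) (m a)) = 0) := by
  classical
  haveI : Finite (Submodule R A) :=
    Finite.of_injective (fun S => (S : Set A)) SetLike.coe_injective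
  set socA := sSup {S : Submodule R A | IsAtom S} with hsoc
  have hAtomsFin : {S : Submodule R A | IsAtom S}.Finite := Set.toFinite _
  set 𝒜 : Finset (Submodule R A) := hAtomsFin.toFinset with h𝒜def
  have h𝒜 : ∀ S ∈ 𝒜, IsAtom S := fun S hS => by
    rw [h𝒜def, Set.Finite.mem_toFinset] at hS; exact hS
  have hsup𝒜 : 𝒜.sup id = socA := by
    apply le_antisymm
    · exact Finset.sup_le fun S hS => le_sSup (h𝒜 S hS)
    · refine sSup_le fun S hS => Finset.le_sup (f := id) ?_
      rw [h𝒜def, Set.Finite.mem_toFinset]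
      exact hS
  -- maximal cyclic submodule of the socle
  obtain ⟨P₀, hP₀mem, hP₀max⟩ :=
    Set.Finite.exists_maximalFor (id : Submodule R A → Submodule R A)
      {P : Submodule R A | ∃ x, x ∈ socA ∧ P = Submodule.span R {x}} (Set.toFinite _)
      ⟨⊥, ⟨0, zero_mem _, by simp⟩⟩
  obtain ⟨x, hx, hPx⟩ := hP₀mem
  subst hPx
  simp only [id_eq] at hP₀max
  set Rx := Submodule.span R {x} with hRxdef
  have hmax : ∀ y, y ∈ socA → Rx ≤ Submodule.span R {y} → Rx = Submodule.span R {y} := by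
    intro y hy hle
    exact le_antisymm hle (@hP₀max (Submodule.span R {y}) ⟨y, hy, rfl⟩ hle)
  have hRxle : Rx ≤ socA := by
    rw [hRxdef, Submodule.span_le, Set.singleton_subset_iff]
    exact hx
  have hne : Rx ≠ socA := fun h => hncyc ⟨x, h.symm⟩
  -- an atom not below Rx
  obtain ⟨T, hT, hTle⟩ : ∃ T : Submodule R A, IsAtom T ∧ ¬ T ≤ Rx := by
    by_contra hc
    push_neg at hc
    exact hne (le_antisymm hRxle (sSup_le fun S hS => hc S hS))
  have hTsoc : T ≤ socA := le_sSup hT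
  have hdisj : T ⊓ Rx = ⊥ := atom_inf_bot hT hTle
  -- the annihilator fact
  have hann : ∀ t ∈ T, ∀ r : R, r • x = 0 → r • t = 0 := by
    intro t ht r hrx
    by_contra hrt
    have hyt : x + t ∈ socA := add_mem hx (hTsoc ht)
    have h1 : r • (x + t) = r • t := by rw [smul_add, hrx, zero_add]
    have h2 : r • t ∈ Submodule.span R {x + t} :=
      h1 ▸ Submodule.smul_mem _ r (Submodule.mem_span_singleton_self _)
    have hTle2 : T ≤ Submodule.span R {x + t} := by
      by_contra hc
      have hb := atom_inf_bot hT hc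
      have : r • t ∈ T ⊓ Submodule.span R {x + t} :=
        Submodule.mem_inf.mpr ⟨T.smul_mem r ht, h2⟩
      rw [hb] at this
      exact hrt this
    have ht' : t ∈ Submodule.span R {x + t} := hTle2 ht
    have hx' : x ∈ Submodule.span R {x + t} := by
      have := sub_mem (Submodule.mem_span_singleton_self (x + t)) ht'
      simpa using this
    have hspanle : Rx ≤ Submodule.span R {x + t} := by
      rw [hRxdef, Submodule.span_le, Set.singleton_subset_iff]; exact hx'
    have heq := hmax (x + t) hyt hspanle
    have htRx : t ∈ Rx := heq ▸ ht'
    have : t ∈ T ⊓ Rx := Submodule.mem_inf.mpr ⟨ht, htRx⟩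
    rw [hdisj] at this
    exact hrt (by rw [(this : t = 0), smul_zero])
  -- instances on T
  haveI hsimple : IsSimpleModule R ↥T := isSimpleModule_iff_isAtom.mpr hT
  letI : DecidableEq (Module.End R ↥T) := Classical.decEq _
  letI instDR : DivisionRing (Module.End R ↥T) := Module.End.instDivisionRing
  haveI : Finite ↥T := Subtype.finite
  haveI : Finite (Module.End R ↥T) :=
    Finite.of_injective (fun f => (f : ↥T → ↥T)) DFunLike.coe_injective
  letI instF : Field (Module.End R ↥T) := littleWedderburn _
  set D := Module.End R ↥T with hD
  haveI : Module.Finite D ↥T := Module.Finite.of_finite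
  set e := Module.finrank D ↥T with he
  -- the evaluation equivalence  Hom(Rx, T) ≃ T
  set xel : ↥Rx := ⟨x, Submodule.mem_span_singleton_self x⟩ with hxel
  set ev : (↥Rx →ₗ[R] ↥T) →ₗ[D] ↥T :=
    { toFun := fun h => h xel
      map_add' := fun _ _ => rfl
      map_smul' := fun _ _ => rfl } with hev
  have evinj : Function.Injective ev := by
    intro h1 h2 hh
    apply LinearMap.ext
    rintro ⟨y, hy⟩
    obtain ⟨r, hr⟩ := Submodule.mem_span_singleton.mp hy
    have hyx : (⟨y, hy⟩ : ↥Rx) = r • xel := Subtype.ext hr.symm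
    rw [hyx, map_smul, map_smul]
    exact congrArg (r • ·) hh
  have evsurj : Function.Surjective ev := by
    intro t
    set β := LinearMap.toSpanSingleton R A x with hβ
    have hrange : Rx = LinearMap.range β := LinearMap.span_singleton_eq_range R A x
    set γ := LinearMap.toSpanSingleton R ↥T t with hγ
    have hker : LinearMap.ker β ≤ LinearMap.ker γ := by
      intro r hr
      have hr' : r • x = 0 := hr
      have := hann (↑t) t.2 r hr'
      exact LinearMap.mem_ker.mpr (Subtype.ext this)
    set η : ↥Rx →ₗ[R] ↥T :=
      (Submodule.liftQ (LinearMap.ker β) γ hker) ∘ₗ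
        (β.quotKerEquivRange.symm.toLinearMap) ∘ₗ
          (LinearEquiv.ofEq _ _ hrange).toLinearMap with hη
    refine ⟨η, ?_⟩
    set v := (LinearEquiv.ofEq Rx (LinearMap.range β) hrange) xel with hvdef
    have hv : β.quotKerEquivRange.symm v = Submodule.Quotient.mk 1 := by
      apply β.quotKerEquivRange.injective
      rw [LinearEquiv.apply_symm_apply]
      apply Subtype.ext
      rw [LinearMap.quotKerEquivRange_apply_mk]
      show ↑v = (1 : R) • x
      rw [one_smul]
      rfl
    show ((LinearMap.ker β).liftQ γ hker) (β.quotKerEquivRange.symm v) = t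
    rw [hv, Submodule.liftQ_apply]
    show (1 : R) • t = t
    rw [one_smul]
  have hfinHom : Module.finrank D (↥Rx →ₗ[R] ↥T) = e :=
    (LinearEquiv.ofBijective ev ⟨evinj, evsurj⟩).finrank_eq
  -- building a chain-independent family of T-isomorphic atoms inside Rx
  set Pred : ℕ → Prop := fun mm => ∃ V : ℕ → Submodule R A,
    ∀ j < mm, V j ≤ Rx ∧ Nonempty (↥T ≃ₗ[R] ↥(V j)) ∧ V j ⊓ ((Finset.range j).sup V) = ⊥
    with hPreddef
  have hbase : Pred 0 := ⟨fun _ => ⊥, fun j hj => absurd hj (Nat.not_lt_zero j)⟩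
  have hstep : ∀ mm, mm < e → Pred mm → Pred (mm + 1) := by
    rintro mm hmm ⟨V, hV⟩
    have hiso : ∀ j : Fin mm, ↥T ≃ₗ[R] ↥(V j) := fun j => Classical.choice (hV j j.isLt).2.1
    set incl : Fin mm → (↥T →ₗ[R] ↥Rx) :=
      fun j => (Submodule.inclusion (hV j j.isLt).1) ∘ₗ (hiso j).toLinearMap with hincl
    set Θ : (↥Rx →ₗ[R] ↥T) →ₗ[D] (Fin mm → D) :=
      { toFun := fun h => fun j => (h ∘ₗ incl j)
        map_add' := fun h1 h2 => funext fun j => LinearMap.add_comp _ _ _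
        map_smul' := fun d h => funext fun j => LinearMap.ext fun s => rfl } with hΘdef
    have hΘni : ¬ Function.Injective Θ := by
      intro hinj
      have hle := LinearMap.finrank_le_finrank_of_injective hinj
      rw [hfinHom, Module.finrank_pi] at hle
      simp only [Fintype.card_fin] at hle
      omega
    obtain ⟨h1, h2, hh12, hne12⟩ := Function.not_injective_iff.mp hΘni
    set h0 := h1 - h2 with hh0def
    have hΘh0 : Θ h0 = 0 := by rw [map_sub, hh12, sub_self]
    have hh0ne : h0 ≠ 0 := sub_ne_zero_of_ne hne12
    set K := Submodule.map Rx.subtype (LinearMap.ker h0) with hKdef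
    have hKle : K ≤ Rx := Submodule.map_subtype_le _ _
    have hVK : ∀ j, ∀ hj : j < mm, V j ≤ K := by
      intro j hj v hv
      have hcomp : (h0 ∘ₗ incl ⟨j, hj⟩) = 0 := congrFun hΘh0 ⟨j, hj⟩
      have hvel : incl ⟨j, hj⟩ ((hiso ⟨j, hj⟩).symm ⟨v, hv⟩) = ⟨v, (hV j hj).1 hv⟩ := by
        apply Subtype.ext
        show ↑((hiso ⟨j, hj⟩) ((hiso ⟨j, hj⟩).symm ⟨v, hv⟩)) = v
        rw [LinearEquiv.apply_symm_apply]
      refine Submodule.mem_map.mpr ⟨⟨v, (hV j hj).1 hv⟩, ?_, rfl⟩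
      rw [LinearMap.mem_ker, ← hvel]
      exact LinearMap.ext_iff.mp hcomp ((hiso ⟨j, hj⟩).symm ⟨v, hv⟩)
    obtain ⟨C', hC'ge, hC'disj, hC'sup⟩ := compl_lemma 𝒜 h𝒜 K ⊥ (by rw [inf_bot_eq])
    have hKsoc : K ⊔ C' = socA := by
      rw [hC'sup, hsup𝒜, sup_bot_eq]
      exact sup_eq_right.mpr (le_trans hKle hRxle)
    set V0 := C' ⊓ Rx with hV0def
    have hmod : K ⊔ (C' ⊓ Rx) = Rx := by
      rw [← sup_inf_assoc_of_le C' hKle, hKsoc]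
      exact inf_eq_right.mpr hRxle
    set ψ : ↥V0 →ₗ[R] ↥T := h0 ∘ₗ Submodule.inclusion (inf_le_right : V0 ≤ Rx) with hψdef
    have hψinj : Function.Injective ψ := by
      intro v1 v2 hv
      have hsub : ψ (v1 - v2) = 0 := by rw [map_sub, hv, sub_self]
      have hvvK : ((v1 - v2 : ↥V0) : A) ∈ K :=
        Submodule.mem_map.mpr ⟨Submodule.inclusion (inf_le_right : V0 ≤ Rx) (v1 - v2), hsub, rfl⟩
      have hvvC : ((v1 - v2 : ↥V0) : A) ∈ C' := (Submodule.mem_inf.mp (v1 - v2).2).1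
      have hvv : ((v1 - v2 : ↥V0) : A) ∈ K ⊓ C' := Submodule.mem_inf.mpr ⟨hvvK, hvvC⟩
      rw [hC'disj] at hvv
      have : v1 - v2 = 0 := Subtype.ext hvv
      exact sub_eq_zero.mp this
    have hψsurj : Function.Surjective ψ := by
      rcases eq_bot_or_eq_top (LinearMap.range ψ) with hr | hr
      · exfalso
        apply hh0ne
        apply LinearMap.ext
        rintro ⟨y, hy⟩
        have hy2 : y ∈ K ⊔ (C' ⊓ Rx) := by rw [hmod]; exact hy
        obtain ⟨u, hu, vv, hvv, huv⟩ := Submodule.mem_sup.mp hy2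
        obtain ⟨u', hu', huu⟩ := Submodule.mem_map.mp hu
        have hsplit : (⟨y, hy⟩ : ↥Rx) =
            u' + Submodule.inclusion (inf_le_right : V0 ≤ Rx) ⟨vv, hvv⟩ := by
          apply Subtype.ext
          show y = ↑u' + vv
          rw [← huv]
          exact congrArg (fun z => z + vv) huu.symm
        rw [hsplit, map_add]
        have h6 : h0 u' = 0 := hu'
        have h7 : h0 (Submodule.inclusion (inf_le_right : V0 ≤ Rx) ⟨vv, hvv⟩) = ψ ⟨vv, hvv⟩ := rfl
        rw [h6, h7, zero_add]
        have hmem : ψ ⟨vv, hvv⟩ ∈ LinearMap.range ψ := ⟨_, rfl⟩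
        rw [hr] at hmem
        exact hmem
      · exact LinearMap.range_eq_top.mp hr
    refine ⟨fun j => if j = mm then V0 else V j, ?_⟩
    intro j hj
    have hVnew_lt : ∀ i, i < mm → (if i = mm then V0 else V i) = V i :=
      fun i hi => if_neg (Nat.ne_of_lt hi)
    dsimp only
    by_cases hjm : j = mm
    · beta_reduce; rw [if_pos hjm]
      refine ⟨inf_le_right, ⟨(LinearEquiv.ofBijective ψ ⟨hψinj, hψsurj⟩).symm⟩, ?_⟩
      have hsup_eq : (Finset.range j).sup (fun i => if i = mm then V0 else V i) =
          (Finset.range j).sup V :=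
        Finset.sup_congr rfl (fun i hi => hVnew_lt i (hjm ▸ Finset.mem_range.mp hi))
      rw [hsup_eq]
      have hsupK : (Finset.range j).sup V ≤ K :=
        Finset.sup_le fun i hi => hVK i (hjm ▸ Finset.mem_range.mp hi)
      apply eq_bot_iff.mpr
      intro a ha
      obtain ⟨ha0, ha1⟩ := Submodule.mem_inf.mp ha
      have : a ∈ K ⊓ C' := Submodule.mem_inf.mpr ⟨hsupK ha1, (Submodule.mem_inf.mp ha0).1⟩
      rw [hC'disj] at this
      exact this
    · have hjlt : j < mm := lt_of_le_of_ne (Nat.lt_succ_iff.mp hj) hjm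
      beta_reduce; rw [if_neg hjm]
      obtain ⟨ha, hb, hc⟩ := hV j hjlt
      refine ⟨ha, hb, ?_⟩
      rw [Finset.sup_congr rfl
        (fun i hi => hVnew_lt i (lt_trans (Finset.mem_range.mp hi) hjlt))]
      exact hc
  have hPn : ∀ mm, mm ≤ e → Pred mm := by
    intro mm
    induction mm with
    | zero => exact fun _ => hbase
    | succ m ih => exact fun hle => hstep m (Nat.lt_of_succ_le hle) (ih (le_trans (Nat.le_succ m) hle))
  obtain ⟨V, hV⟩ := hPn e le_rfl
  have hisoE : ∀ j, j < e → Nonempty (↥T ≃ₗ[R] ↥(V j)) := fun j hj => (hV j hj).2.1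
  set φ : ∀ j : Fin e, ↥T ≃ₗ[R] ↥(V j) := fun j => Classical.choice (hisoE j j.isLt) with hφ
  set k := e + 1 with hk
  set w : Fin k → (↥T →ₗ[R] A) := fun j =>
    if hj : (j : ℕ) < e then (V j).subtype ∘ₗ (φ ⟨j, hj⟩).toLinearMap else T.subtype with hw
  have hlastw : w (Fin.last e) = T.subtype := by
    rw [hw]
    exact dif_neg (by simp)
  have hcastw : ∀ j : Fin e, w (Fin.castSucc j) = (V j).subtype ∘ₗ (φ j).toLinearMap := by
    intro j
    rw [hw]
    exact dif_pos (by simpa using j.isLt)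
  refine ⟨T, hT, k, Nat.succ_pos e, w, ?_, ?_⟩
  · -- sum zero implies zero
    intro m hm
    rw [Fin.sum_univ_castSucc] at hm
    have hterm : ∀ j : Fin e, w (Fin.castSucc j) (m (Fin.castSucc j)) ∈ V j := by
      intro j
      rw [hcastw]
      exact Submodule.coe_mem _
    have hSsum_mem : (∑ j : Fin e, w (Fin.castSucc j) (m (Fin.castSucc j))) ∈ Rx :=
      Submodule.sum_mem _ fun j _ => (hV j j.isLt).1 (hterm j)
    rw [hlastw] at hm
    have hlz : (↑(m (Fin.last e)) : A) ∈ T ⊓ Rx := by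
      refine Submodule.mem_inf.mpr ⟨(m (Fin.last e)).2, ?_⟩
      have hneg : (↑(m (Fin.last e)) : A) =
          -(∑ j : Fin e, w (Fin.castSucc j) (m (Fin.castSucc j))) :=
        eq_neg_of_add_eq_zero_right hm
      rw [hneg]
      exact neg_mem hSsum_mem
    rw [hdisj] at hlz
    have hmlast : m (Fin.last e) = 0 := Subtype.ext hlz
    have hsz : (∑ j : Fin e, w (Fin.castSucc j) (m (Fin.castSucc j))) = 0 := by
      have : (T.subtype) (m (Fin.last e)) = 0 := by rw [hmlast, map_zero]
      rwa [this, add_zero] at hm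
    set u : ℕ → A := fun j =>
      if hj : j < e then w (Fin.castSucc ⟨j, hj⟩) (m (Fin.castSucc ⟨j, hj⟩)) else 0 with hu
    have humem : ∀ j, ∀ hj : j < e, u j ∈ V j := by
      intro j hj
      rw [hu]
      dsimp only
      rw [dif_pos hj]
      exact hterm ⟨j, hj⟩
    have hsz' : (∑ j ∈ Finset.range e, u j) = 0 := by
      rw [Finset.sum_range (fun j => u j)]
      rw [← hsz]
      apply Finset.sum_congr rfl
      intro j _
      rw [hu]
      dsimp only
      rw [dif_pos j.isLt]
    have hzero : ∀ s, s ≤ e → (∑ j ∈ Finset.range s, u j) = 0 → ∀ j, j < s → u j = 0 := by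
      intro s
      induction s with
      | zero => exact fun _ _ j hj => absurd hj (Nat.not_lt_zero j)
      | succ t ih =>
        intro hse hsum j hj
        have ht : t < e := Nat.lt_of_succ_le hse
        rw [Finset.sum_range_succ] at hsum
        have hmemsum : (∑ i ∈ Finset.range t, u i) ∈ (Finset.range t).sup V :=
          Submodule.sum_mem _ fun i hi =>
            (Finset.le_sup (f := V) hi) (humem i (lt_trans (Finset.mem_range.mp hi) ht))
        have hut : u t = 0 := by
          have hmem : u t ∈ V t ⊓ (Finset.range t).sup V := by
            refine Submodule.mem_inf.mpr ⟨humem t ht, ?_⟩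
            have : u t = -(∑ i ∈ Finset.range t, u i) := eq_neg_of_add_eq_zero_right hsum
            rw [this]
            exact neg_mem hmemsum
          rw [(hV t ht).2.2] at hmem
          exact hmem
        rcases Nat.lt_succ_iff_lt_or_eq.mp hj with hlt | heq
        · exact ih (le_of_lt ht) (by rwa [hut, add_zero] at hsum) j hlt
        · rwa [heq]
    funext j
    refine Fin.lastCases ?_ ?_ j
    · exact hmlast
    · intro i
      have hui := hzero e le_rfl hsz' i i.isLt
      rw [hu] at hui
      dsimp only at hui
      rw [dif_pos i.isLt] at hui
      rw [hcastw] at hui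
      have : (φ ⟨i, i.isLt⟩) (m (Fin.castSucc ⟨i, i.isLt⟩)) = 0 := Subtype.ext hui
      have hmz := (φ ⟨i, i.isLt⟩).map_eq_zero_iff.mp this
      have hieta : (⟨(i : ℕ), i.isLt⟩ : Fin e) = i := rfl
      rw [hieta] at hmz
      exact hmz
  · -- evaluation maps are never injective
    intro m
    set evm : (Fin k → D) →ₗ[D] ↥T :=
      { toFun := fun z => ∑ a, z a • (m a)
        map_add' := by
          intro z1 z2
          simp only [Pi.add_apply, add_smul]
          rw [Finset.sum_add_distrib]
        map_smul' := fun c z => by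
          simp only [Pi.smul_apply, smul_eq_mul, mul_smul, RingHom.id_apply]
          rw [Finset.smul_sum]
          exact Finset.sum_congr rfl fun x _ => rfl } with hevm
    have hni : ¬ Function.Injective evm := by
      intro hinj
      have hle := LinearMap.finrank_le_finrank_of_injective hinj
      rw [Module.finrank_pi] at hle
      simp only [Fintype.card_fin] at hle
      omega
    obtain ⟨z1, z2, hz12, hzne⟩ := Function.not_injective_iff.mp hni
    refine ⟨z1 - z2, sub_ne_zero_of_ne hzne, ?_⟩
    have hz : evm (z1 - z2) = 0 := by rw [map_sub, hz12, sub_self]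
    exact hz

section Part2

variable (D : Type*) [Field D] [Finite D]
variable {k : ℕ} {𝕄 : Type*} [AddCommGroup 𝕄] [Module R 𝕄]

/-- The abstract code-construction half. -/
theorem part2 [Nontrivial 𝕄]
    (act : Matrix (Fin k) (Fin k) D →+ (𝕄 →ₗ[R] 𝕄))
    (hactinj : ∀ Y, act Y = 0 → Y = 0)
    (Φ : 𝕄 →ₗ[R] A) (hΦ : Function.Injective Φ)
    (hZ : ∀ (m : 𝕄) (c : D), ∃ Z, act Z m = 0 ∧ Matrix.trace Z = c)
    (G : Subgroup (A ≃ₗ[R] A)) :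
    ∃ n : ℕ, 0 < n ∧
      ∃ (C : Submodule R (Fin n → A)) (f : C →ₗ[R] (Fin n → A)),
        (∀ (c : C) (a₀ : A), swcG G (f c : Fin n → A) a₀ = swcG G (c : Fin n → A) a₀) ∧
        ¬ ∃ h : (Fin n → A) → (Fin n → A),
            IsGMonomial G h ∧ ∀ c : C, h (c : Fin n → A) = f c := by
  classical
  -- chosen "trace-adjusting" matrices
  set Mk := Matrix (Fin k) (Fin k) D with hMk
  let Zf : 𝕄 → D → Mk := fun m c => (hZ m c).choose
  have hZf1 : ∀ m c, act (Zf m c) m = 0 := fun m c => (hZ m c).choose_spec.1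
  have hZf2 : ∀ m c, Matrix.trace (Zf m c) = c := fun m c => (hZ m c).choose_spec.2
  -- index types
  let JP := ({Y : Mk // Matrix.trace Y = 0} × {c : D // c ≠ 0}) ⊕ Unit
  let JN := {Y : Mk // Matrix.trace Y ≠ 0} ⊕ Unit
  let coordP : JP → (𝕄 →ₗ[R] A) := Sum.elim (fun p => Φ ∘ₗ (act p.1.1)) (fun _ => Φ)
  let coordN : JN → (𝕄 →ₗ[R] A) := Sum.elim (fun p => Φ ∘ₗ (act p.1)) (fun _ => Φ)
  -- the master equivalence
  have master : ∀ (m : 𝕄) (P : A → Prop),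
      {j : JP // P (coordP j m)} ≃ {j : JN // P (coordN j m)} := by
    intro m P
    have hval : ∀ (Y : Mk) (c : D), act (Y + Zf m c) m = act Y m := by
      intro Y c; rw [map_add, LinearMap.add_apply, hZf1, add_zero]
    have hval' : ∀ (Y : Mk) (c : D), act (Y - Zf m c) m = act Y m := by
      intro Y c; rw [map_sub, LinearMap.sub_apply, hZf1, sub_zero]
    have htr : ∀ (Y : Mk) (c : D), Matrix.trace (Y + Zf m c) = Matrix.trace Y + c := by
      intro Y c; rw [Matrix.trace_add, hZf2]
    have htr' : ∀ (Y : Mk) (c : D), Matrix.trace (Y - Zf m c) = Matrix.trace Y - c := by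
      intro Y c; rw [Matrix.trace_sub, hZf2]
    refine
      { toFun := fun x => match x with
          | ⟨Sum.inl (⟨Y, hY⟩, ⟨c, hc⟩), hj⟩ =>
            ⟨Sum.inl ⟨Y + Zf m c, by rw [htr, hY, zero_add]; exact hc⟩, by
              show P (Φ (act (Y + Zf m c) m)); rw [hval]; exact hj⟩
          | ⟨Sum.inr _, hj⟩ => ⟨Sum.inr (), hj⟩
        invFun := fun x => match x with
          | ⟨Sum.inl ⟨Y', hY'⟩, hj⟩ =>
            ⟨Sum.inl (⟨Y' - Zf m (Matrix.trace Y'), by rw [htr', sub_self]⟩,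
               ⟨Matrix.trace Y', hY'⟩), by
              show P (Φ (act (Y' - Zf m (Matrix.trace Y')) m)); rw [hval']; exact hj⟩
          | ⟨Sum.inr _, hj⟩ => ⟨Sum.inr (), hj⟩
        left_inv := ?_
        right_inv := ?_ }
    · rintro ⟨(⟨⟨Y, hY⟩, ⟨c, hc⟩⟩ | u), hj⟩
      · have h1 : Matrix.trace (Y + Zf m c) = c := by rw [htr, hY, zero_add]
        apply Subtype.ext
        simp [h1, add_sub_cancel_right]
      · rfl
    · rintro ⟨(⟨Y', hY'⟩ | u), hj⟩
      · apply Subtype.ext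
        simp [sub_add_cancel]
      · rfl
  -- index equivalences
  haveI : Finite JP := by
    haveI : Finite Mk := by unfold Mk; infer_instance
    infer_instance
  haveI : Finite JN := by
    haveI : Finite Mk := by unfold Mk; infer_instance
    infer_instance
  obtain ⟨n, ⟨σN⟩⟩ := Finite.exists_equiv_fin JN
  have e0 : JP ≃ JN :=
    (Equiv.subtypeUnivEquiv (fun _ => trivial)).symm.trans
      ((master 0 (fun _ => True)).trans (Equiv.subtypeUnivEquiv (fun _ => trivial)))
  let τN : Fin n ≃ JN := σN.symm
  let τP : Fin n ≃ JP := τN.trans e0.symm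
  have hn : 0 < n := by
    apply Nat.pos_of_ne_zero
    intro h0
    subst h0
    exact (σN (Sum.inr ())).elim0
  let ιP : 𝕄 →ₗ[R] (Fin n → A) := LinearMap.pi (fun i => coordP (τP i))
  let ιN : 𝕄 →ₗ[R] (Fin n → A) := LinearMap.pi (fun i => coordN (τN i))
  have hcoordP : ∀ (m : 𝕄) (i : Fin n), ιP m i = coordP (τP i) m := fun _ _ => rfl
  have hcoordN : ∀ (m : 𝕄) (i : Fin n), ιN m i = coordN (τN i) m := fun _ _ => rfl
  have hιP : Function.Injective ιP := by
    have hker : ∀ m, ιP m = 0 → m = 0 := by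
      intro m hm
      have h1 := congrFun hm (τP.symm (Sum.inr ()))
      rw [hcoordP, Equiv.apply_symm_apply] at h1
      exact hΦ (by simpa [coordP] using h1)
    intro m m' hmm
    have : ιP (m - m') = 0 := by rw [map_sub, hmm, sub_self]
    have := hker _ this
    rwa [sub_eq_zero] at this
  let eC : 𝕄 ≃ₗ[R] ↥(LinearMap.range ιP) := LinearEquiv.ofInjective ιP hιP
  have heC : ∀ m : 𝕄, ((eC m : ↥(LinearMap.range ιP)) : Fin n → A) = ιP m := by
    intro m; rfl
  refine ⟨n, hn, LinearMap.range ιP, ιN ∘ₗ (eC.symm.toLinearMap), ?_, ?_⟩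
  · -- isometry
    intro c a₀
    have hc : (c : Fin n → A) = ιP (eC.symm c) := by
      conv_lhs => rw [← eC.apply_symm_apply c]
      exact heC _
    have hf : ((ιN ∘ₗ eC.symm.toLinearMap) c : Fin n → A) = ιN (eC.symm c) := rfl
    set m := eC.symm c
    rw [swcG, swcG, hf, hc]
    congr 1
    have E1 : {i : Fin n // ιP m i ∈ orbitG G a₀} ≃ {j : JP // coordP j m ∈ orbitG G a₀} :=
      Equiv.subtypeEquiv τP (fun i => by rw [hcoordP])
    have E3 : {i : Fin n // ιN m i ∈ orbitG G a₀} ≃ {j : JN // coordN j m ∈ orbitG G a₀} :=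
      Equiv.subtypeEquiv τN (fun i => by rw [hcoordN])
    exact Nat.card_congr (E3.trans ((master m (· ∈ orbitG G a₀)).symm.trans E1.symm))
  · -- non-extension
    rintro ⟨h, ⟨π, g, hgcl, hgm⟩, hext⟩
    let j0 : JP := Sum.inl (⟨0, by simp⟩, ⟨1, one_ne_zero⟩)
    let i0 : Fin n := τP.symm j0
    let i1 : Fin n := π.symm i0
    have key : ∀ m : 𝕄, coordN (τN i1) m = 0 := by
      intro m
      have hc : h (ιP m) = ιN (eC.symm (eC m)) := by
        have h1 := hext (eC m)
        rwa [heC] at h1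
      rw [LinearEquiv.symm_apply_apply] at hc
      have h2 := hgm (ιP m) i1
      rw [hc] at h2
      have h3 : ιP m (π i1) = 0 := by
        have : π i1 = i0 := Equiv.apply_symm_apply π i0
        rw [this, hcoordP, Equiv.apply_symm_apply]
        show Φ (act 0 m) = 0
        rw [map_zero]
        exact (map_zero Φ : _)
      rw [h3] at h2
      rw [← hcoordN m i1, h2, map_zero]
    rcases hτ : τN i1 with Yp | u
    · obtain ⟨Y', hY'⟩ := Yp
      have hact0 : act Y' = 0 := by
        apply LinearMap.ext
        intro m
        have := key m
        rw [hτ] at this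
        have : Φ (act Y' m) = Φ 0 := by
          rw [map_zero]; exact this
        exact hΦ this
      exact hY' (by rw [hactinj Y' hact0, Matrix.trace_zero])
    · obtain ⟨m0, hm0⟩ := exists_ne (0 : 𝕄)
      have := key m0
      rw [hτ] at this
      have : Φ m0 = Φ 0 := by rw [map_zero]; exact this
      exact hm0 (hΦ this)

end Part2

/-- If `soc(A)` is not cyclic, then for every subgroup `G ≤ Aut_R(A)` the alphabet `A`
does not have the extension property with respect to `swc_G`: there are a positive
integer `n`, a linear code `C ⊆ A^n` and an `swc_G`-isometry `f : C → A^n` that does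
not extend to a `G`-monomial map of `A^n`. -/
theorem not_hasExtensionProperty_of_socle_not_cyclic [Finite R] [Finite A]
    (hncyc : ¬ ∃ a : A, socle R A = Submodule.span R {a}) :
    ∀ G : Subgroup (A ≃ₗ[R] A),
      ∃ n : ℕ, 0 < n ∧
        ∃ (C : Submodule R (Fin n → A)) (f : C →ₗ[R] (Fin n → A)),
          (∀ (c : C) (a₀ : A), swcG G (f c : Fin n → A) a₀ = swcG G (c : Fin n → A) a₀) ∧
          ¬ ∃ h : (Fin n → A) → (Fin n → A),
              IsGMonomial G h ∧ ∀ c : C, h (c : Fin n → A) = f c := by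
  intro G
  classical
  have hncyc' : ¬ ∃ a : A, sSup {S : Submodule R A | IsAtom S} = Submodule.span R {a} := by
    intro hc
    exact hncyc (by rwa [socle])
  obtain ⟨T, hT, k, hk, w, hΦ0, hker⟩ := part1 hncyc'
  haveI hsimple : IsSimpleModule R ↥T := isSimpleModule_iff_isAtom.mpr hT
  letI : DecidableEq (Module.End R ↥T) := Classical.decEq _
  letI : DivisionRing (Module.End R ↥T) := Module.End.instDivisionRing
  haveI : Finite ↥T := Subtype.finite
  haveI : Finite (Module.End R ↥T) :=
    Finite.of_injective (fun f => (f : ↥T → ↥T)) DFunLike.coe_injective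
  letI : Field (Module.End R ↥T) := littleWedderburn _
  haveI : Nontrivial ↥T := IsSimpleModule.nontrivial R ↥T
  haveI : Nontrivial (Fin k → ↥T) := by
    obtain ⟨t0, ht0⟩ := exists_ne (0 : ↥T)
    exact ⟨(fun _ => t0), 0, fun hcon => ht0 (congrFun hcon ⟨0, hk⟩)⟩
  set actf : Matrix (Fin k) (Fin k) (Module.End R ↥T) → ((Fin k → ↥T) →ₗ[R] (Fin k → ↥T)) := fun Y =>
    { toFun := fun m j => ∑ i, (Y i j) (m i)
      map_add' := by
        intro m1 m2
        funext j
        show (∑ i, (Y i j) ((m1 + m2) i)) = (∑ i, (Y i j) (m1 i)) + (∑ i, (Y i j) (m2 i))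
        rw [← Finset.sum_add_distrib]
        exact Finset.sum_congr rfl fun i _ => by rw [Pi.add_apply, map_add]
      map_smul' := by
        intro r m
        funext j
        show (∑ i, (Y i j) ((r • m) i)) = r • ∑ i, (Y i j) (m i)
        rw [Finset.smul_sum]
        exact Finset.sum_congr rfl fun i _ => by rw [Pi.smul_apply, map_smul] } with hactf
  set act : Matrix (Fin k) (Fin k) (Module.End R ↥T) →+ ((Fin k → ↥T) →ₗ[R] (Fin k → ↥T)) :=
    AddMonoidHom.mk' actf (by
      intro Y Z
      apply LinearMap.ext
      intro m
      funext j
      show (∑ i, ((Y + Z) i j) (m i)) = (∑ i, (Y i j) (m i)) + (∑ i, (Z i j) (m i))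
      rw [← Finset.sum_add_distrib]
      apply Finset.sum_congr rfl
      intro i _
      rw [Matrix.add_apply, LinearMap.add_apply]) with hact
  have hactapp : ∀ (Y : Matrix (Fin k) (Fin k) (Module.End R ↥T)) (m : (Fin k → ↥T)) (j : Fin k),
      act Y m j = ∑ i, (Y i j) (m i) := fun Y m j => rfl
  have hactinj : ∀ Y, act Y = 0 → Y = 0 := by
    intro Y hY
    by_contra hne
    obtain ⟨i, j, hij⟩ : ∃ i j, Y i j ≠ 0 := by
      by_contra hc
      push_neg at hc
      exact hne (by ext i j; rw [hc]; rfl)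
    obtain ⟨s, hs⟩ : ∃ s : ↥T, Y i j s ≠ 0 := by
      by_contra hc
      push_neg at hc
      exact hij (LinearMap.ext fun s => by rw [hc]; rfl)
    have h1 : act Y (Pi.single i s) j = 0 := by rw [hY]; rfl
    have h2 : act Y (Pi.single i s) j = Y i j s := by
      rw [hactapp]
      rw [Finset.sum_eq_single i]
      · rw [Pi.single_eq_same]
      · intro b _ hb
        rw [Pi.single_eq_of_ne hb, map_zero]
      · intro hmem
        exact absurd (Finset.mem_univ i) hmem
    rw [h1] at h2
    exact hs h2.symm
  set Φ : (Fin k → ↥T) →ₗ[R] A :=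
    { toFun := fun m => ∑ j, w j (m j)
      map_add' := by
        intro m1 m2
        rw [← Finset.sum_add_distrib]
        exact Finset.sum_congr rfl fun j _ => by rw [Pi.add_apply, map_add]
      map_smul' := by
        intro r m
        show (∑ j, w j ((r • m) j)) = r • ∑ j, w j (m j)
        rw [Finset.smul_sum]
        exact Finset.sum_congr rfl fun j _ => by rw [Pi.smul_apply, map_smul] } with hΦdef
  have hΦinj : Function.Injective Φ := by
    intro m1 m2 h12
    have h0 : Φ (m1 - m2) = 0 := by rw [map_sub, h12, sub_self]
    exact sub_eq_zero.mp (hΦ0 (m1 - m2) h0)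
  have hZ : ∀ (m : (Fin k → ↥T)) (c : (Module.End R ↥T)), ∃ Z, act Z m = 0 ∧ Matrix.trace Z = c := by
    intro m c
    obtain ⟨z, hzne, hz0⟩ := hker m
    obtain ⟨i0, hi0⟩ : ∃ i0, z i0 ≠ 0 := by
      by_contra hc
      push_neg at hc
      exact hzne (funext hc)
    set d : (Module.End R ↥T) := c * (z i0)⁻¹ with hd
    refine ⟨fun a b => if b = i0 then d * z a else 0, ?_, ?_⟩
    · funext j
      refine (hactapp _ m j).trans ?_
      by_cases hj : j = i0
      · subst hj
        have hstep : ∀ i : Fin k,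
            (if (j : Fin k) = j then d * z i else 0) (m i) = d ((z i) (m i)) := by
          intro i
          rw [if_pos rfl]
          rfl
        calc (∑ i, (if (j : Fin k) = j then d * z i else 0) (m i))
            = ∑ i, d ((z i) (m i)) := Finset.sum_congr rfl (fun i _ => hstep i)
          _ = d (∑ i, (z i) (m i)) := (map_sum d _ _).symm
          _ = 0 := by rw [hz0, map_zero]
      · apply Finset.sum_eq_zero
        intro i _
        rw [if_neg hj]
        rfl
    · show Matrix.trace _ = c
      simp only [Matrix.trace, Matrix.diag]
      rw [Finset.sum_eq_single i0]
      · rw [if_pos rfl, hd]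
        exact inv_mul_cancel_right₀ hi0 c
      · intro b _ hb
        rw [if_neg hb]
      · intro hmem
        exact absurd (Finset.mem_univ i0) hmem
  exact part2 (Module.End R ↥T) act hactinj Φ hΦinj hZ G
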